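/- If a graph G on n vertices has a Hamiltonian cycle, then E(G) ≥ n. -/

import Mathlib

open Finset Matrix

noncomputable section

variable {V : Type*} [Fintype V] [DecidableEq V]

/-- The adjacency matrix of a simple graph is Hermitian (over ℝ). -/
theorem SimpleGraph.isHermitian_adjMatrix' (G : SimpleGraph V) [DecidableRel G.Adj] :
    (G.adjMatrix ℝ).IsHermitian := by
  rw [Matrix.IsHermitian, Matrix.conjTranspose_eq_transpose_of_trivial]
  exact G.isSymm_adjMatrix

/-- The energy of a graph: the sum of the absolute values of the
eigenvalues of its adjacency matrix. -/
def SimpleGraph.energy (G : SimpleGraph V) [DecidableRel G.Adj] : ℝ :=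
  ∑ k, |G.isHermitian_adjMatrix'.eigenvalues k|

/-- The Randić index of a graph: the sum over the (unordered) edges `(i,j)`
of `1/√(deg i · deg j)`. -/
def SimpleGraph.randic (G : SimpleGraph V) [DecidableRel G.Adj] : ℝ :=
  ∑ e ∈ G.edgeFinset,
    Sym2.lift ⟨fun i j => 1 / Real.sqrt (G.degree i * G.degree j),
      fun i j => by simp [mul_comm]⟩ e

end

private lemma walk_support_eq_map' {V : Type*} {G : SimpleGraph V} {x y : V} (p : G.Walk x y) :
    p.support = (List.range (p.length + 1)).map p.getVert := by
  induction p with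
  | nil => simp [List.range_succ]
  | cons h q ih =>
    conv_rhs => rw [SimpleGraph.Walk.length_cons, List.range_succ_eq_map,
      List.map_cons, List.map_map]
    rw [SimpleGraph.Walk.support_cons, ih]
    simp [Function.comp_def, SimpleGraph.Walk.getVert_cons_succ,
      SimpleGraph.Walk.getVert_zero]

private lemma ham_deg_two' {n : ℕ} {G : SimpleGraph (Fin n)}
    (u : Fin n) (w : G.Walk u u) (hw : w.IsHamiltonianCycle) (v : Fin n) :
    (Finset.univ.filter fun j => s(v, j) ∈ w.edges).card = 2 := by
  classical
  have hlen : w.length = n := by simpa using hw.length_eq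
  have hn3 : 3 ≤ n := hlen ▸ hw.isCycle.three_le_length
  haveI : NeZero n := ⟨by omega⟩
  have hnodup : w.support.tail.Nodup := ((SimpleGraph.Walk.isCycle_def w).mp hw.isCycle).2.2
  have htail : w.support.tail = (List.range n).map (fun i => w.getVert (i + 1)) := by
    rw [walk_support_eq_map', hlen, List.range_succ_eq_map]
    simp [List.map_map, Function.comp_def]
  rw [htail, List.nodup_map_iff_inj_on List.nodup_range] at hnodup
  simp only [List.mem_range] at hnodup
  have h0n : w.getVert n = w.getVert 0 := by
    have hgl := w.getVert_length
    rw [hlen] at hgl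
    rw [hgl, SimpleGraph.Walk.getVert_zero]
  have hinj : ∀ i j, i < n → j < n → w.getVert i = w.getVert j → i = j := by
    intro i j hi hj hij
    rcases Nat.eq_zero_or_pos i with rfl | hi0
    · rcases Nat.eq_zero_or_pos j with rfl | hj0
      · rfl
      · exfalso
        have := hnodup (n-1) (by omega) (j-1) (by omega)
          (by rw [Nat.sub_add_cancel (by omega), Nat.sub_add_cancel (by omega), h0n, hij])
        omega
    · rcases Nat.eq_zero_or_pos j with rfl | hj0
      · exfalso
        have := hnodup (i-1) (by omega) (n-1) (by omega)
          (by rw [Nat.sub_add_cancel (by omega), Nat.sub_add_cancel (by omega), h0n, hij])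
        omega
      · have := hnodup (i-1) (by omega) (j-1) (by omega)
          (by rw [Nat.sub_add_cancel (by omega), Nat.sub_add_cancel (by omega), hij])
        omega
  set g : ZMod n → Fin n := fun k => w.getVert k.val with hg
  have hginj : Function.Injective g := by
    intro k k' hkk'
    exact ZMod.val_injective n (hinj _ _ (ZMod.val_lt k) (ZMod.val_lt k') hkk')
  have hgsucc : ∀ k : ZMod n, g (k + 1) = w.getVert (k.val + 1) := by
    intro k
    haveI : Fact (1 < n) := ⟨by omega⟩
    have hv : (k + 1).val = (k.val + 1) % n := by rw [ZMod.val_add, ZMod.val_one]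
    show w.getVert (k + 1).val = w.getVert (k.val + 1)
    rw [hv]
    by_cases h : k.val + 1 = n
    · rw [h, Nat.mod_self]
      exact h0n.symm
    · rw [Nat.mod_eq_of_lt (lt_of_le_of_ne (ZMod.val_lt k) h)]
  have hedgeF : ∀ k : ZMod n, s(g k, g (k + 1)) ∈ w.edges := by
    intro k
    have h1 : k.val < w.length := by rw [hlen]; exact ZMod.val_lt k
    have h2 := w.toSubgraph_adj_getVert h1
    rw [← SimpleGraph.Subgraph.mem_edgeSet, w.mem_edges_toSubgraph] at h2
    rw [hgsucc]
    exact h2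
  have hedgeB : ∀ a b : Fin n, s(a, b) ∈ w.edges →
      ∃ k : ZMod n, (g k = a ∧ g (k+1) = b) ∨ (g k = b ∧ g (k+1) = a) := by
    intro a b hab
    have h2 : w.toSubgraph.Adj a b := by
      rw [← SimpleGraph.Subgraph.mem_edgeSet, w.mem_edges_toSubgraph]; exact hab
    obtain ⟨i, hi1, hi2⟩ := (w.toSubgraph_adj_iff).mp h2
    rw [hlen] at hi2
    refine ⟨(i : ZMod n), ?_⟩
    have hiv : (i : ZMod n).val = i := ZMod.val_cast_of_lt hi2
    have hgi : g (i : ZMod n) = w.getVert i := by show w.getVert _ = _; rw [hiv]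
    have hgi1 : g ((i : ZMod n) + 1) = w.getVert (i + 1) := by rw [hgsucc, hiv]
    rw [Sym2.eq_iff] at hi1
    rcases hi1 with ⟨h1, h2⟩ | ⟨h1, h2⟩
    · exact Or.inl ⟨hgi.trans h1, hgi1.trans h2⟩
    · exact Or.inr ⟨hgi.trans h1, hgi1.trans h2⟩
  have hgsurj : Function.Surjective g :=
    ((Fintype.bijective_iff_injective_and_card g).mpr
      ⟨hginj, by simp [ZMod.card]⟩).2
  obtain ⟨i, rfl⟩ := hgsurj v
  have hne : g (i - 1) ≠ g (i + 1) := by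
    intro h
    have heq : (i - 1 : ZMod n) = i + 1 := hginj h
    have h2 : ((2 : ℕ) : ZMod n) = 0 := by
      rw [Nat.cast_ofNat]
      linear_combination -heq
    rw [ZMod.natCast_eq_zero_iff] at h2
    exact absurd (Nat.le_of_dvd (by norm_num) h2) (by omega)
  have hset : (Finset.univ.filter fun j => s(g i, j) ∈ w.edges) = {g (i - 1), g (i + 1)} := by
    ext j
    simp only [Finset.mem_filter, Finset.mem_univ, true_and, Finset.mem_insert,
      Finset.mem_singleton]
    constructor
    · intro hj
      obtain ⟨k, ⟨h1, h2⟩ | ⟨h1, h2⟩⟩ := hedgeB _ _ hj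
      · have hki : k = i := hginj h1
        subst hki
        exact Or.inr h2.symm
      · have hki : k + 1 = i := hginj h2
        have hk : k = i - 1 := by rw [← hki]; ring
        exact Or.inl (by rw [← hk]; exact h1.symm)
    · rintro (rfl | rfl)
      · have h3 := hedgeF (i - 1)
        rw [sub_add_cancel] at h3
        rw [Sym2.eq_swap]
        exact h3
      · exact hedgeF i
  rw [hset, Finset.card_insert_of_notMem (by simpa using hne), Finset.card_singleton]

private lemma abs_mul_le_half' (a b : ℝ) : |a * b| ≤ (a * a + b * b) / 2 := by
  rw [abs_mul]
  nlinarith [sq_nonneg (|a| - |b|), abs_nonneg a, abs_nonneg b, sq_abs a, sq_abs b]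


private lemma trace_energy_bound' {n : ℕ} (A : Matrix (Fin n) (Fin n) ℝ) (hA : A.IsHermitian)
    (Hv : Fin n → Fin n → ℝ) (hHsymm : ∀ i j, Hv i j = Hv j i)
    (hHnn : ∀ i j, (0:ℝ) ≤ Hv i j) (hrow : ∀ i, ∑ j, Hv i j = 2)
    (hAH : ∀ i j, Hv i j * A i j = Hv i j) :
    2 * (n : ℝ) ≤ 2 * ∑ k, |hA.eigenvalues k| := by
  classical
  set U : Matrix (Fin n) (Fin n) ℝ := (hA.eigenvectorUnitary : Matrix (Fin n) (Fin n) ℝ) with hU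
  set ev : Fin n → ℝ := hA.eigenvalues with hev
  have hcol : ∀ k, ∑ i, U i k * U i k = 1 := by
    intro k
    have h := (Unitary.mem_iff.mp hA.eigenvectorUnitary.2).1
    have h2 : ((star (hA.eigenvectorUnitary : Matrix (Fin n) (Fin n) ℝ)) *
        (hA.eigenvectorUnitary : Matrix (Fin n) (Fin n) ℝ)) k k = 1 := by rw [h]; simp
    rw [Matrix.mul_apply] at h2
    simpa [Matrix.star_apply, hU] using h2
  have hspec : ∀ i j, A i j = ∑ k, ev k * (U i k * U j k) := by
    intro i j
    conv_lhs => rw [hA.spectral_theorem, Unitary.conjStarAlgAut_apply]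
    rw [Matrix.mul_apply]
    refine Finset.sum_congr rfl fun k _ => ?_
    rw [Matrix.mul_diagonal, Matrix.star_apply]
    simp [Function.comp, RCLike.ofReal, hU, hev]
    ring
  set c : Fin n → ℝ := fun k => ∑ i, ∑ j, Hv i j * (U i k * U j k) with hc
  have hT1 : ∑ i, ∑ j, Hv i j * A i j = 2 * n := by
    have h3 : ∀ i, ∑ j, Hv i j * A i j = 2 := by
      intro i
      rw [Finset.sum_congr rfl fun j _ => hAH i j, hrow]
    rw [Finset.sum_congr rfl fun i _ => h3 i]
    simp [mul_comm]
  have hT2 : ∑ i, ∑ j, Hv i j * A i j = ∑ k, ev k * c k := by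
    calc ∑ i, ∑ j, Hv i j * A i j
        = ∑ i, ∑ j, ∑ k, ev k * (Hv i j * (U i k * U j k)) := by
          refine Finset.sum_congr rfl fun i _ => Finset.sum_congr rfl fun j _ => ?_
          rw [hspec, Finset.mul_sum]
          exact Finset.sum_congr rfl fun k _ => by ring
      _ = ∑ i, ∑ k, ∑ j, ev k * (Hv i j * (U i k * U j k)) :=
          Finset.sum_congr rfl fun i _ => Finset.sum_comm
      _ = ∑ k, ∑ i, ∑ j, ev k * (Hv i j * (U i k * U j k)) := Finset.sum_comm
      _ = ∑ k, ev k * c k := by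
          refine Finset.sum_congr rfl fun k _ => ?_
          rw [hc]
          simp only
          rw [Finset.mul_sum]
          exact Finset.sum_congr rfl fun i _ => by rw [Finset.mul_sum]
  have hbound : ∀ k, |c k| ≤ 2 := by
    intro k
    have h1 : |c k| ≤ ∑ i, ∑ j, Hv i j * ((U i k * U i k) + (U j k * U j k)) / 2 := by
      calc |c k| ≤ ∑ i, |∑ j, Hv i j * (U i k * U j k)| := Finset.abs_sum_le_sum_abs _ _
        _ ≤ ∑ i, ∑ j, |Hv i j * (U i k * U j k)| :=
            Finset.sum_le_sum fun i _ => Finset.abs_sum_le_sum_abs _ _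
        _ ≤ ∑ i, ∑ j, Hv i j * ((U i k * U i k) + (U j k * U j k)) / 2 := by
            refine Finset.sum_le_sum fun i _ => Finset.sum_le_sum fun j _ => ?_
            rw [abs_mul, abs_of_nonneg (hHnn i j)]
            have h4 := mul_le_mul_of_nonneg_left (abs_mul_le_half' (U i k) (U j k)) (hHnn i j)
            calc Hv i j * |U i k * U j k| ≤ Hv i j * ((U i k * U i k + U j k * U j k) / 2) := h4
              _ = Hv i j * (U i k * U i k + U j k * U j k) / 2 := by ring
    have e1 : ∑ i, ∑ j, Hv i j * (U i k * U i k) = 2 := by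
      have h5 : ∀ i, ∑ j, Hv i j * (U i k * U i k) = 2 * (U i k * U i k) := by
        intro i
        rw [← Finset.sum_mul, hrow]
      rw [Finset.sum_congr rfl fun i _ => h5 i, ← Finset.mul_sum, hcol, mul_one]
    have e2 : ∑ i, ∑ j, Hv i j * (U j k * U j k) = 2 := by
      rw [Finset.sum_comm, ← e1]
      exact Finset.sum_congr rfl fun j _ => Finset.sum_congr rfl fun i _ => by rw [hHsymm]
    have h2 : ∑ i, ∑ j, Hv i j * ((U i k * U i k) + (U j k * U j k)) / 2 = 2 := by
      calc ∑ i, ∑ j, Hv i j * ((U i k * U i k) + (U j k * U j k)) / 2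
          = ∑ i, ∑ j, (Hv i j * (U i k * U i k) / 2 + Hv i j * (U j k * U j k) / 2) :=
            Finset.sum_congr rfl fun i _ => Finset.sum_congr rfl fun j _ => by ring
        _ = (∑ i, ∑ j, Hv i j * (U i k * U i k)) / 2
            + (∑ i, ∑ j, Hv i j * (U j k * U j k)) / 2 := by
            rw [Finset.sum_div, Finset.sum_div, ← Finset.sum_add_distrib]
            refine Finset.sum_congr rfl fun i _ => ?_
            rw [Finset.sum_div, Finset.sum_div, ← Finset.sum_add_distrib]
        _ = 2 := by rw [e1, e2]; norm_num
    calc |c k| ≤ ∑ i, ∑ j, Hv i j * ((U i k * U i k) + (U j k * U j k)) / 2 := h1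
      _ = 2 := h2
  calc 2 * (n : ℝ) = ∑ k, ev k * c k := by rw [← hT2, hT1]
    _ ≤ |∑ k, ev k * c k| := le_abs_self _
    _ ≤ ∑ k, |ev k * c k| := Finset.abs_sum_le_sum_abs _ _
    _ ≤ ∑ k, |ev k| * 2 := by
        refine Finset.sum_le_sum fun k _ => ?_
        rw [abs_mul]
        exact mul_le_mul_of_nonneg_left (hbound k) (abs_nonneg _)
    _ = 2 * ∑ k, |ev k| := by rw [← Finset.sum_mul]; ring

/-- If a graph `G` on `n` vertices has a Hamiltonian cycle, then `E(G) ≥ n`. -/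
theorem stmt9 {n : ℕ} (G : SimpleGraph (Fin n)) [DecidableRel G.Adj]
    (u : Fin n) (w : G.Walk u u) (hw : w.IsHamiltonianCycle) :
    (n : ℝ) ≤ G.energy := by
  classical
  set Hv : Fin n → Fin n → ℝ := fun i j => if s(i,j) ∈ w.edges then 1 else 0 with hHv
  have hHsymm : ∀ i j, Hv i j = Hv j i := fun i j => by
    simp only [hHv, Sym2.eq_swap]
  have hHnn : ∀ i j, (0:ℝ) ≤ Hv i j := fun i j => by
    simp only [hHv]; positivity
  have hrow : ∀ i, ∑ j, Hv i j = 2 := by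
    intro i
    simp only [hHv]
    rw [Finset.sum_boole, ham_deg_two' u w hw i]
    norm_num
  have hAH : ∀ i j, Hv i j * (G.adjMatrix ℝ) i j = Hv i j := by
    intro i j
    simp only [hHv]
    by_cases h : s(i,j) ∈ w.edges
    · simp [h, w.adj_of_mem_edges h]
    · simp [h]
  have key := trace_energy_bound' (G.adjMatrix ℝ) G.isHermitian_adjMatrix'
    Hv hHsymm hHnn hrow hAH
  rw [SimpleGraph.energy]
  linarith
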